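/- Let g : ℝ → ℝ be a convex function such that the limit g(-∞) := lim_{x→-∞} g(x) exists and is finite. Then the right derivative g' of g satisfies g'(x) → 0 as x → -∞. -/

import Mathlib

open Filter Set

lemma convex_slope_monoOn (g : ℝ → ℝ) (hg : ConvexOn ℝ Set.univ g) (x : ℝ) :
    MonotoneOn (slope g x) (Set.Ioi x) := by
  have := hg.slope_mono (x := x) (Set.mem_univ x)
  exact this.mono (by intro y hy; exact ⟨Set.mem_univ y, ne_of_gt hy⟩)

lemma convex_slope_lb (g : ℝ → ℝ) (hg : ConvexOn ℝ Set.univ g) (x y : ℝ) (hy : x < y) :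
    slope g x (x - 1) ≤ slope g x y := by
  have := hg.slope_mono (x := x) (Set.mem_univ x)
  exact this ⟨Set.mem_univ _, by norm_num⟩ ⟨Set.mem_univ _, ne_of_gt hy⟩
    (by linarith)

lemma convex_hasRightDeriv (g : ℝ → ℝ) (hg : ConvexOn ℝ Set.univ g) (x : ℝ) :
    HasDerivWithinAt g (sInf (slope g x '' Set.Ioi x)) (Set.Ioi x) x := by
  rw [hasDerivWithinAt_iff_tendsto_slope' (notMem_Ioi_self)]
  exact (convex_slope_monoOn g hg x).tendsto_nhdsGT
    ⟨slope g x (x - 1), by rintro _ ⟨y, hy, rfl⟩; exact convex_slope_lb g hg x y hy⟩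

theorem rightDeriv_tendsto_zero_atBot (g : ℝ → ℝ) (hg : ConvexOn ℝ Set.univ g)
    (L : ℝ) (hlim : Tendsto g atBot (nhds L)) :
    Tendsto (fun x => derivWithin g (Set.Ioi x) x) atBot (nhds 0) := by
  have hd : ∀ x : ℝ, derivWithin g (Set.Ioi x) x = sInf (slope g x '' Set.Ioi x) :=
    fun x => (convex_hasRightDeriv g hg x).derivWithin (uniqueDiffWithinAt_Ioi x)
  have hub : ∀ x : ℝ, derivWithin g (Set.Ioi x) x ≤ g (x + 1) - g x := by
    intro x
    have := hg.rightDeriv_le_slope (Set.mem_univ x) (Set.mem_univ (x + 1))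
      (lt_add_one x) (convex_hasRightDeriv g hg x).differentiableWithinAt
    rw [slope_def_field, show x + 1 - x = (1 : ℝ) by ring, div_one] at this
    exact this
  have hlb : ∀ x : ℝ, g x - g (x - 1) ≤ derivWithin g (Set.Ioi x) x := by
    intro x
    rw [hd x]
    have h1 : g x - g (x - 1) = slope g x (x - 1) := by
      rw [slope_def_field]
      field_simp
      ring
    rw [h1]
    refine le_csInf ⟨_, Set.mem_image_of_mem _ (lt_add_one x)⟩ ?_
    rintro _ ⟨y, hy, rfl⟩
    exact convex_slope_lb g hg x y hy
  have h1 : Tendsto (fun x : ℝ => g x - g (x - 1)) atBot (nhds 0) := by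
    have : Tendsto (fun x : ℝ => g (x - 1)) atBot (nhds L) :=
      hlim.comp (tendsto_atBot_add_const_right _ (-1) tendsto_id |>.congr (by simp [sub_eq_add_neg]))
    simpa using hlim.sub this
  have h2 : Tendsto (fun x : ℝ => g (x + 1) - g x) atBot (nhds 0) := by
    have : Tendsto (fun x : ℝ => g (x + 1)) atBot (nhds L) :=
      hlim.comp (tendsto_atBot_add_const_right _ 1 tendsto_id)
    simpa using this.sub hlim
  exact tendsto_of_tendsto_of_tendsto_of_le_of_le h1 h2 hlb hub
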